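/- arXiv:2506.17883 — 2 statements merged into one kernel-verified Lean document; each statement's English description precedes it below -/
import Mathlib

section
/- Suppose (r,θ) ∈ ℝ^d × ℝ^d satisfies ‖r‖ = 1 and Σ_{P∈G₂} φ_P(r,θ)² ≤ ε/2ⁿ for some 0 ≤ ε ≤ 1/4. Let h₀ = (1/2ⁿ) Σ_{P diagonal n-qubit Pauli string} tr(K(r,θ)† H K(r,θ) P) · P and set H̃ = K(r,θ) h₀ K(r,θ)†. Then ‖H − H̃‖₂ ≤ 2·√(F(r,θ)/2ⁿ) + 9·‖H‖_F·√ε, where ‖·‖₂ denotes the spectral (operator) norm and ‖·‖_F the Frobenius norm. -/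
open Matrix Complex
open scoped Classical

noncomputable section

/-- Single-qubit Pauli matrices: `0 ↦ I`, `1 ↦ X`, `2 ↦ Y`, `3 ↦ Z`. -/
def pauli1 (a : Fin 4) : Matrix (Fin 2) (Fin 2) ℂ :=
  if a = 0 then 1
  else if a = 1 then !![0, 1; 1, 0]
  else if a = 2 then !![0, -Complex.I; Complex.I, 0]
  else !![1, 0; 0, -1]

/-- The `n`-qubit Pauli string `σ^{(1)} ⊗ ⋯ ⊗ σ^{(n)}` associated to `s : Fin n → Fin 4`,
realized as a matrix on the `(Fin n → Fin 2)`-indexed space of dimension `2^n`. -/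
def pauliOp {n : ℕ} (s : Fin n → Fin 4) :
    Matrix (Fin n → Fin 2) (Fin n → Fin 2) ℂ :=
  Matrix.of fun i j => ∏ k, pauli1 (s k) (i k) (j k)

/-- `G₁`: the off-diagonal Pauli strings (some factor is `X` or `Y`). -/
def G1 (n : ℕ) : Finset (Fin n → Fin 4) :=
  Finset.univ.filter fun s => ∃ k, s k = 1 ∨ s k = 2

/-- The diagonal Pauli strings (every factor is `I` or `Z`). -/
def DiagStrings (n : ℕ) : Finset (Fin n → Fin 4) :=
  Finset.univ.filter fun s => ∀ k, s k = 0 ∨ s k = 3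

variable {n d : ℕ}

/-- `K(r,θ) = Σ_j r_j e^{iθ_j} P_j`. -/
def Kmat (P : Fin d → Fin n → Fin 4) (x : (Fin d → ℝ) × (Fin d → ℝ)) :
    Matrix (Fin n → Fin 2) (Fin n → Fin 2) ℂ :=
  ∑ j, ((x.1 j : ℂ) * Complex.exp (Complex.I * (x.2 j : ℂ))) • pauliOp (P j)

/-- The cost function `f(r,θ) = Σ_{P ∈ G₁} tr(K(r,θ)† H K(r,θ) P)²` (the traces being real). -/
def costf (H : Matrix (Fin n → Fin 2) (Fin n → Fin 2) ℂ)
    (P : Fin d → Fin n → Fin 4) (x : (Fin d → ℝ) × (Fin d → ℝ)) : ℝ :=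
  ∑ Q ∈ G1 n, (((Kmat P x)ᴴ * H * Kmat P x * pauliOp Q).trace.re) ^ 2

/-- `φ_P(r,θ) = 2^{-n} tr(K(r,θ)† K(r,θ) P)` (real). -/
def phi (P : Fin d → Fin n → Fin 4) (Q : Fin n → Fin 4)
    (x : (Fin d → ℝ) × (Fin d → ℝ)) : ℝ :=
  (1 / 2 ^ n) * ((Kmat P x)ᴴ * Kmat P x * pauliOp Q).trace.re

/-- `G₂`: non-identity Pauli strings `Q` with `P_i P_j ∈ {Q, -Q, iQ, -iQ}` for some `i, j`. -/
def G2 (P : Fin d → Fin n → Fin 4) : Finset (Fin n → Fin 4) :=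
  Finset.univ.filter fun Q => Q ≠ (fun _ => 0) ∧ ∃ i j : Fin d, ∃ c : ℂ,
    (c = 1 ∨ c = -1 ∨ c = Complex.I ∨ c = -Complex.I) ∧
    pauliOp (P i) * pauliOp (P j) = c • pauliOp Q

/-- The total cost function `F = f + Σ_{P ∈ G₂} φ_P²`. -/
def totalF (H : Matrix (Fin n → Fin 2) (Fin n → Fin 2) ℂ)
    (P : Fin d → Fin n → Fin 4) (x : (Fin d → ℝ) × (Fin d → ℝ)) : ℝ :=
  costf H P x + ∑ Q ∈ G2 P, phi P Q x ^ 2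

end

noncomputable section

/-- `h₀(r,θ) = 2^{-n} Σ_{P diagonal} tr(K†HK P) · P`. -/
def h0 {n d : ℕ} (H : Matrix (Fin n → Fin 2) (Fin n → Fin 2) ℂ)
    (P : Fin d → Fin n → Fin 4) (x : (Fin d → ℝ) × (Fin d → ℝ)) :
    Matrix (Fin n → Fin 2) (Fin n → Fin 2) ℂ :=
  ((2 : ℂ) ^ n)⁻¹ •
    ∑ Q ∈ DiagStrings n, ((Kmat P x)ᴴ * H * Kmat P x * pauliOp Q).trace • pauliOp Q

/-- The spectral (operator) norm of a complex matrix, i.e. the operator norm of the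
induced map on the Euclidean space `ℓ²`. -/
def specNorm {m : Type*} [Fintype m] [DecidableEq m] (M : Matrix m m ℂ) : ℝ :=
  ‖Matrix.toEuclideanCLM (𝕜 := ℂ) M‖

/-- The Frobenius norm of a complex matrix. -/
def frobNorm {m : Type*} [Fintype m] (M : Matrix m m ℂ) : ℝ :=
  Real.sqrt (∑ i, ∑ j, ‖M i j‖ ^ 2)

end
-- ==================== Auxiliary lemmas ====================

open scoped Matrix.Norms.L2Operator

noncomputable section AuxS10

/-- multiplication table index for Pauli matrices -/
def m4 : Fin 4 → Fin 4 → Fin 4 := fun a b =>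
  if a = b then 0 else if a = 0 then b else if b = 0 then a
  else (if (a:ℕ) + b = 3 then 3 else if (a:ℕ) + b = 4 then 2 else 1 : Fin 4)

/-- phase table for Pauli matrices -/
def c4 : Fin 4 → Fin 4 → ℂ := fun a b =>
  if a = b ∨ a = 0 ∨ b = 0 then 1
  else if (a = 1 ∧ b = 2) ∨ (a = 2 ∧ b = 3) ∨ (a = 3 ∧ b = 1) then Complex.I
  else -Complex.I

lemma pauli1_conj (a : Fin 4) (i j : Fin 2) :
    (starRingEnd ℂ) (pauli1 a i j) = pauli1 a j i := by
  fin_cases a <;> fin_cases i <;> fin_cases j <;>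
    simp [pauli1, Matrix.one_apply]

lemma pauli1_mul (a b : Fin 4) : pauli1 a * pauli1 b = c4 a b • pauli1 (m4 a b) := by
  fin_cases a <;> fin_cases b <;>
    · ext i j
      fin_cases i <;> fin_cases j <;>
        simp [pauli1, c4, m4, Matrix.mul_apply, Fin.sum_univ_two, Matrix.one_apply]

lemma m4_self (a : Fin 4) : m4 a a = 0 := by fin_cases a <;> rfl
lemma c4_self (a : Fin 4) : c4 a a = 1 := by fin_cases a <;> simp [c4]
lemma m4_eq_zero_iff {a b : Fin 4} : m4 a b = 0 ↔ a = b := by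
  fin_cases a <;> fin_cases b <;> simp [m4]

def R4 (z : ℂ) : Prop := z = 1 ∨ z = -1 ∨ z = Complex.I ∨ z = -Complex.I

lemma R4_c4 (a b : Fin 4) : R4 (c4 a b) := by
  fin_cases a <;> fin_cases b <;> simp [c4, R4]

lemma R4_mul {z w : ℂ} (hz : R4 z) (hw : R4 w) : R4 (z * w) := by
  rcases hz with h|h|h|h <;> rcases hw with h'|h'|h'|h' <;>
    subst h <;> subst h' <;> simp [R4, Complex.I_mul_I] <;> norm_num [Complex.ext_iff]

lemma R4_one : R4 1 := Or.inl rfl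

lemma pauli1_complete (p q r s : Fin 2) :
    ∑ a : Fin 4, pauli1 a p q * pauli1 a r s = if p = s ∧ q = r then 2 else 0 := by
  fin_cases p <;> fin_cases q <;> fin_cases r <;> fin_cases s <;>
    simp [pauli1, Fin.sum_univ_four, Matrix.one_apply] <;> norm_num [Complex.ext_iff]

lemma pauli1_diag_complete (p q r s : Fin 2) :
    ∑ a ∈ ({0,3} : Finset (Fin 4)), pauli1 a p q * pauli1 a r s
      = if p = q ∧ r = s ∧ p = r then 2 else 0 := by
  fin_cases p <;> fin_cases q <;> fin_cases r <;> fin_cases s <;>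
    simp [pauli1, Matrix.one_apply, Finset.sum_insert, Finset.sum_singleton] <;>
    norm_num [Complex.ext_iff]

lemma pauli1_trace (a : Fin 4) : ∑ b : Fin 2, pauli1 a b b = if a = 0 then 2 else 0 := by
  fin_cases a <;> simp [pauli1, Fin.sum_univ_two, Matrix.one_apply]

lemma pauli1_offdiag_zero {a : Fin 4} (ha : a = 1 ∨ a = 2) (i : Fin 2) : pauli1 a i i = 0 := by
  rcases ha with h|h <;> subst h <;> fin_cases i <;> simp [pauli1]

lemma pauli1_diag_offdiag_zero {a : Fin 4} (ha : a = 0 ∨ a = 3) {i j : Fin 2} (hij : i ≠ j) :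
    pauli1 a i j = 0 := by
  rcases ha with h|h <;> subst h <;> fin_cases i <;> fin_cases j <;>
    simp_all [pauli1, Matrix.one_apply] <;> omega

-- ============ string level ============

variable {n : ℕ}

lemma R4_prod {m : ℕ} (f : Fin m → ℂ) (h : ∀ k, R4 (f k)) : R4 (∏ k, f k) :=
  Finset.prod_induction f R4 (fun _ _ => R4_mul) R4_one (fun k _ => h k)

lemma pauliOp_zero :
    pauliOp (fun _ => (0 : Fin 4)) = (1 : Matrix (Fin n → Fin 2) (Fin n → Fin 2) ℂ) := by
  ext i j
  simp only [pauliOp, Matrix.of_apply, Matrix.one_apply, pauli1]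
  by_cases h : i = j
  · subst h; simp [Matrix.one_apply]
  · rw [if_neg h]
    obtain ⟨k, hk⟩ := Function.ne_iff.mp h
    exact Finset.prod_eq_zero (Finset.mem_univ k) (by simp [Matrix.one_apply, hk])

lemma pauliOp_conjTranspose (s : Fin n → Fin 4) : (pauliOp s)ᴴ = pauliOp s := by
  ext i j
  simp only [Matrix.conjTranspose_apply, pauliOp, Matrix.of_apply]
  rw [show (star (∏ k, pauli1 (s k) (j k) (i k)) : ℂ)
      = ∏ k, (starRingEnd ℂ) (pauli1 (s k) (j k) (i k)) from map_prod (starRingEnd ℂ) _ _]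
  exact Finset.prod_congr rfl fun k _ => pauli1_conj _ _ _

lemma pauliOp_star_apply (s : Fin n → Fin 4) (a b : Fin n → Fin 2) :
    star (pauliOp s a b) = pauliOp s b a := by
  conv_rhs => rw [← pauliOp_conjTranspose s]
  rfl

lemma pauliOp_mul (s t : Fin n → Fin 4) :
    pauliOp s * pauliOp t
      = (∏ k, c4 (s k) (t k)) • pauliOp (fun k => m4 (s k) (t k)) := by
  ext i j
  rw [Matrix.mul_apply]
  have h1 : ∀ x : Fin n → Fin 2,
      pauliOp s i x * pauliOp t x j
        = ∏ k, pauli1 (s k) (i k) (x k) * pauli1 (t k) (x k) (j k) := by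
    intro x
    simp only [pauliOp, Matrix.of_apply]
    rw [Finset.prod_mul_distrib]
  simp only [h1]
  rw [← Fintype.prod_sum (κ := fun _ : Fin n => Fin 2)
      (f := fun k b => pauli1 (s k) (i k) b * pauli1 (t k) b (j k))]
  have h2 : ∀ k : Fin n, (∑ b : Fin 2, pauli1 (s k) (i k) b * pauli1 (t k) b (j k))
      = c4 (s k) (t k) * pauli1 (m4 (s k) (t k)) (i k) (j k) := by
    intro k
    have := congrArg (fun M => M (i k) (j k)) (pauli1_mul (s k) (t k))
    simpa [Matrix.mul_apply, Matrix.smul_apply, smul_eq_mul] using this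
  rw [Finset.prod_congr rfl fun k _ => h2 k, Finset.prod_mul_distrib]
  simp [pauliOp, Matrix.smul_apply, smul_eq_mul]

lemma pauliOp_trace (s : Fin n → Fin 4) :
    (pauliOp s).trace = if s = (fun _ => 0) then ((2 : ℂ) ^ n) else 0 := by
  rw [Matrix.trace]
  have : ∀ i : Fin n → Fin 2, (pauliOp s).diag i = ∏ k, pauli1 (s k) (i k) (i k) := fun i => rfl
  simp only [this]
  rw [← Fintype.prod_sum (κ := fun _ : Fin n => Fin 2) (f := fun k b => pauli1 (s k) b b)]
  by_cases h : s = fun _ => 0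
  · subst h
    rw [if_pos rfl]
    rw [Finset.prod_congr rfl fun k _ => pauli1_trace 0]
    simp
  · rw [if_neg h]
    obtain ⟨k, hk⟩ := Function.ne_iff.mp h
    refine Finset.prod_eq_zero (Finset.mem_univ k) ?_
    rw [pauli1_trace, if_neg hk]

lemma pauliOp_orth (s t : Fin n → Fin 4) :
    (pauliOp s * pauliOp t).trace = if s = t then ((2 : ℂ) ^ n) else 0 := by
  rw [pauliOp_mul, Matrix.trace_smul, pauliOp_trace]
  by_cases h : s = t
  · subst h
    simp [m4_self, c4_self]
  · have : ¬(fun k => m4 (s k) (t k)) = (fun _ => (0 : Fin 4)) := by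
      intro hc
      exact h (funext fun k => m4_eq_zero_iff.mp (congrFun hc k))
    simp [this, h]

lemma pauliOp_complete (i j k l : Fin n → Fin 2) :
    ∑ s : Fin n → Fin 4, pauliOp s i j * pauliOp s k l
      = if i = l ∧ j = k then ((2 : ℂ) ^ n) else 0 := by
  have h1 : ∀ s : Fin n → Fin 4, pauliOp s i j * pauliOp s k l
      = ∏ k', pauli1 (s k') (i k') (j k') * pauli1 (s k') (k k') (l k') := by
    intro s; simp only [pauliOp, Matrix.of_apply]; rw [Finset.prod_mul_distrib]
  simp only [h1]
  rw [← Fintype.prod_sum (κ := fun _ : Fin n => Fin 4)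
      (f := fun k' a => pauli1 a (i k') (j k') * pauli1 a (k k') (l k'))]
  simp only [pauli1_complete]
  by_cases h : i = l ∧ j = k
  · rw [if_pos h]
    obtain ⟨h1', h2'⟩ := h
    subst h1'; subst h2'
    simp
  · rw [if_neg h]
    rw [not_and_or] at h
    rcases h with h | h
    · obtain ⟨k', hk'⟩ := Function.ne_iff.mp h
      exact Finset.prod_eq_zero (Finset.mem_univ k') (by simp [hk'])
    · obtain ⟨k', hk'⟩ := Function.ne_iff.mp h
      exact Finset.prod_eq_zero (Finset.mem_univ k') (by simp [hk'])

lemma DiagStrings_eq :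
    DiagStrings n = Fintype.piFinset (fun _ : Fin n => ({0, 3} : Finset (Fin 4))) := by
  ext s
  simp [DiagStrings, Fintype.mem_piFinset]

lemma pauliOp_diag_complete (i j k l : Fin n → Fin 2) :
    ∑ s ∈ DiagStrings n, pauliOp s i j * pauliOp s k l
      = if i = j ∧ k = l ∧ i = k then ((2 : ℂ) ^ n) else 0 := by
  have h1 : ∀ s : Fin n → Fin 4, pauliOp s i j * pauliOp s k l
      = ∏ k', pauli1 (s k') (i k') (j k') * pauli1 (s k') (k k') (l k') := by
    intro s; simp only [pauliOp, Matrix.of_apply]; rw [Finset.prod_mul_distrib]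
  simp only [h1, DiagStrings_eq]
  rw [Finset.sum_prod_piFinset ({0,3} : Finset (Fin 4))
      (fun k' a => pauli1 a (i k') (j k') * pauli1 a (k k') (l k'))]
  simp only [pauli1_diag_complete]
  by_cases h : i = j ∧ k = l ∧ i = k
  · rw [if_pos h]
    obtain ⟨h1', h2', h3'⟩ := h
    subst h1'; subst h2'; subst h3'
    simp
  · rw [if_neg h]
    have hex : ∃ k', ¬(i k' = j k' ∧ k k' = l k' ∧ i k' = k k') := by
      by_contra hc
      push_neg at hc
      refine h ⟨funext fun k' => ?_, funext fun k' => ?_, funext fun k' => ?_⟩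
      · exact (hc k').1
      · exact (hc k').2.1
      · exact (hc k').2.2
    obtain ⟨k', hk'⟩ := hex
    exact Finset.prod_eq_zero (Finset.mem_univ k') (by simp [hk'])

lemma mem_G1_iff (s : Fin n → Fin 4) : s ∈ G1 n ↔ ¬(s ∈ DiagStrings n) := by
  simp only [G1, DiagStrings, Finset.mem_filter, Finset.mem_univ, true_and]
  rw [not_forall]
  exact exists_congr fun k =>
    (by decide : ∀ a : Fin 4, ((a = 1 ∨ a = 2) ↔ ¬(a = 0 ∨ a = 3))) (s k)

lemma pauliOp_G1_diag_zero {s : Fin n → Fin 4} (hs : s ∈ G1 n) (i : Fin n → Fin 2) :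
    pauliOp s i i = 0 := by
  simp only [G1, Finset.mem_filter, Finset.mem_univ, true_and] at hs
  obtain ⟨k, hk⟩ := hs
  exact Finset.prod_eq_zero (Finset.mem_univ k) (pauli1_offdiag_zero hk (i k))

lemma pauliOp_diagstr_offdiag_zero {s : Fin n → Fin 4} (hs : s ∈ DiagStrings n)
    {i j : Fin n → Fin 2} (hij : i ≠ j) : pauliOp s i j = 0 := by
  simp only [DiagStrings, Finset.mem_filter, Finset.mem_univ, true_and] at hs
  obtain ⟨k, hk⟩ := Function.ne_iff.mp hij
  exact Finset.prod_eq_zero (Finset.mem_univ k) (pauli1_diag_offdiag_zero (hs k) hk)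

end AuxS10
-- ==================== Norm lemmas ====================

noncomputable section AuxNorm

variable {m : Type*} [Fintype m] [DecidableEq m]

omit [DecidableEq m] in
lemma frobNorm_nonneg (A : Matrix m m ℂ) : 0 ≤ frobNorm A := Real.sqrt_nonneg _

omit [DecidableEq m] in
lemma frobNorm_sq (A : Matrix m m ℂ) : frobNorm A ^ 2 = ∑ i, ∑ j, ‖A i j‖ ^ 2 :=
  Real.sq_sqrt (Finset.sum_nonneg fun _ _ => Finset.sum_nonneg fun _ _ => sq_nonneg _)

omit [DecidableEq m] in
lemma frobNorm_conjTranspose (A : Matrix m m ℂ) : frobNorm Aᴴ = frobNorm A := by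
  unfold frobNorm
  rw [Finset.sum_comm]
  congr 1
  refine Finset.sum_congr rfl fun i _ => Finset.sum_congr rfl fun j _ => ?_
  simp [Matrix.conjTranspose_apply]

omit [DecidableEq m] in
lemma euclid_norm_sq (v : EuclideanSpace ℂ m) : ‖v‖ ^ 2 = ∑ i, ‖v i‖ ^ 2 := by
  rw [EuclideanSpace.norm_eq, Real.sq_sqrt (Finset.sum_nonneg fun _ _ => sq_nonneg _)]

lemma specNorm_le_frobNorm (A : Matrix m m ℂ) : ‖A‖ ≤ frobNorm A := by
  rw [Matrix.l2_opNorm_def]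
  refine ContinuousLinearMap.opNorm_le_bound _ (frobNorm_nonneg A) fun x => ?_
  have hx : (0:ℝ) ≤ ‖x‖ := norm_nonneg x
  set v : EuclideanSpace ℂ m := ((toEuclideanLin ≪≫ₗ LinearMap.toContinuousLinearMap) A) x with hv
  have key : ‖v‖ ^ 2 ≤ (frobNorm A) ^ 2 * ‖x‖ ^ 2 := by
    have happ : (v : EuclideanSpace ℂ m)
        = (WithLp.equiv 2 (m → ℂ)).symm (A.mulVec (WithLp.equiv 2 (m → ℂ) x)) := rfl
    rw [happ, euclid_norm_sq, euclid_norm_sq, frobNorm_sq]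
    rw [Finset.sum_mul]
    refine Finset.sum_le_sum fun i _ => ?_
    have h1 : ‖((WithLp.equiv 2 (m → ℂ)).symm (A.mulVec (WithLp.equiv 2 (m → ℂ) x)) :
        EuclideanSpace ℂ m) i‖ = ‖∑ j, A i j * x j‖ := rfl
    rw [h1]
    have h2 : ‖∑ j, A i j * x j‖ ≤ ∑ j, ‖A i j‖ * ‖x j‖ := by
      refine (norm_sum_le _ _).trans ?_
      exact Finset.sum_le_sum fun j _ => by rw [norm_mul]
    have h3 : (∑ j, ‖A i j‖ * ‖x j‖) ^ 2 ≤ (∑ j, ‖A i j‖ ^ 2) * ∑ j, ‖x j‖ ^ 2 :=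
      Finset.sum_mul_sq_le_sq_mul_sq _ _ _
    calc ‖∑ j, A i j * x j‖ ^ 2 ≤ (∑ j, ‖A i j‖ * ‖x j‖) ^ 2 := by
          apply pow_le_pow_left₀ (norm_nonneg _) h2
      _ ≤ (∑ j, ‖A i j‖ ^ 2) * ∑ j, ‖x j‖ ^ 2 := h3
  nlinarith [norm_nonneg v, frobNorm_nonneg A, mul_nonneg (frobNorm_nonneg A) hx]

lemma frobNorm_mul_le_left (A B : Matrix m m ℂ) : frobNorm (A * B) ≤ ‖A‖ * frobNorm B := by
  have hnn : 0 ≤ ‖A‖ := norm_nonneg _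
  have key : frobNorm (A * B) ^ 2 ≤ (‖A‖ * frobNorm B) ^ 2 := by
    rw [frobNorm_sq, mul_pow, frobNorm_sq]
    rw [show (∑ i, ∑ j, ‖(A * B) i j‖ ^ 2) = ∑ j, ∑ i, ‖(A * B) i j‖ ^ 2 from Finset.sum_comm]
    rw [show (∑ i, ∑ j, ‖B i j‖ ^ 2) = ∑ j, ∑ i, ‖B i j‖ ^ 2 from Finset.sum_comm]
    rw [Finset.mul_sum]
    refine Finset.sum_le_sum fun j _ => ?_
    have hcol : ∀ i, (A * B) i j = A.mulVec (fun k => B k j) i := by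
      intro i; simp [Matrix.mul_apply, Matrix.mulVec, dotProduct]
    have hv := Matrix.l2_opNorm_mulVec A ((WithLp.equiv 2 (m → ℂ)).symm (fun k => B k j))
    have h2 : (∑ i, ‖(A * B) i j‖ ^ 2)
        = ‖((EuclideanSpace.equiv m ℂ).symm (A *ᵥ (fun k => B k j)) : EuclideanSpace ℂ m)‖ ^ 2 := by
      rw [euclid_norm_sq]
      exact Finset.sum_congr rfl fun i _ => by rw [hcol i]; rfl
    rw [h2]
    have h3 : ‖((WithLp.equiv 2 (m → ℂ)).symm (fun k => B k j) : EuclideanSpace ℂ m)‖ ^ 2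
        = ∑ i, ‖B i j‖ ^ 2 := by rw [euclid_norm_sq]; rfl
    calc ‖((EuclideanSpace.equiv m ℂ).symm (A *ᵥ (fun k => B k j)) : EuclideanSpace ℂ m)‖ ^ 2
        ≤ (‖A‖ * ‖((WithLp.equiv 2 (m → ℂ)).symm (fun k => B k j) : EuclideanSpace ℂ m)‖) ^ 2 := by
          apply pow_le_pow_left₀ (norm_nonneg _) ?_
          exact hv
      _ = ‖A‖ ^ 2 * ∑ i, ‖B i j‖ ^ 2 := by rw [mul_pow, h3]
  have h4 : 0 ≤ ‖A‖ * frobNorm B := mul_nonneg hnn (frobNorm_nonneg B)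
  nlinarith [frobNorm_nonneg (A * B)]

lemma frobNorm_mul_le_right (A B : Matrix m m ℂ) : frobNorm (A * B) ≤ frobNorm A * ‖B‖ := by
  have : frobNorm (A * B) = frobNorm (Bᴴ * Aᴴ) := by
    rw [← Matrix.conjTranspose_mul, frobNorm_conjTranspose]
  rw [this]
  calc frobNorm (Bᴴ * Aᴴ) ≤ ‖Bᴴ‖ * frobNorm Aᴴ := frobNorm_mul_le_left _ _
    _ = frobNorm A * ‖B‖ := by rw [Matrix.l2_opNorm_conjTranspose, frobNorm_conjTranspose, mul_comm]

lemma matrix_norm_one_le : ‖(1 : Matrix m m ℂ)‖ ≤ 1 := by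
  rw [Matrix.cstar_norm_def, _root_.map_one]
  exact ContinuousLinearMap.norm_id_le

-- ===== invertibility =====

lemma Kv_lower (K : Matrix m m ℂ) (hE : ‖Kᴴ * K - 1‖ ≤ 1/2) :
    ∀ v : EuclideanSpace ℂ m, ‖v‖ ^ 2 ≤ 2 * ‖toEuclideanCLM (𝕜 := ℂ) K v‖ ^ 2 := by
  intro v
  set T := toEuclideanCLM (𝕜 := ℂ) K with hT
  set TE := toEuclideanCLM (𝕜 := ℂ) (Kᴴ * K - 1) with hTE
  have h1 : ‖T v‖ ^ 2 = Complex.re (inner ℂ (T v) (T v) : ℂ) := by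
    rw [inner_self_eq_norm_sq_to_K (𝕜 := ℂ) (T v)]
    norm_cast
  have h2 : (inner ℂ (T v) (T v) : ℂ) = inner ℂ ((ContinuousLinearMap.adjoint T) (T v)) v :=
    (ContinuousLinearMap.adjoint_inner_left T v (T v)).symm
  have h3 : (ContinuousLinearMap.adjoint T) (T v) = v + TE v := by
    have hs : ContinuousLinearMap.adjoint T = toEuclideanCLM (𝕜 := ℂ) Kᴴ := by
      rw [← ContinuousLinearMap.star_eq_adjoint, hT, ← map_star, star_eq_conjTranspose]
    rw [hs]
    have hcomp : (toEuclideanCLM (𝕜 := ℂ) Kᴴ) (T v)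
        = (toEuclideanCLM (𝕜 := ℂ) (Kᴴ * K)) v := by
      rw [_root_.map_mul]; rfl
    rw [hcomp, show Kᴴ * K = 1 + (Kᴴ * K - 1) by abel, _root_.map_add, _root_.map_one]
    rfl
  have h4 : Complex.re (inner ℂ (v + TE v) v : ℂ) = ‖v‖ ^ 2 + Complex.re (inner ℂ (TE v) v : ℂ) := by
    rw [inner_add_left, Complex.add_re, inner_self_eq_norm_sq_to_K (𝕜 := ℂ) v]
    norm_cast
  have h5 : |Complex.re (inner ℂ (TE v) v : ℂ)| ≤ (1/2) * (‖v‖ * ‖v‖) := by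
    calc |Complex.re (inner ℂ (TE v) v : ℂ)| ≤ ‖(inner ℂ (TE v) v : ℂ)‖ :=
          Complex.abs_re_le_norm _
      _ ≤ ‖TE v‖ * ‖v‖ := by
          rw [show ‖(inner ℂ (TE v) v : ℂ)‖ = ‖(inner ℂ (TE v) v : ℂ)‖ from rfl]
          exact norm_inner_le_norm _ _
      _ ≤ (‖TE‖ * ‖v‖) * ‖v‖ := by
          have := TE.le_opNorm v
          have hv := norm_nonneg v
          nlinarith [norm_nonneg (TE v)]
      _ ≤ (1/2) * (‖v‖ * ‖v‖) := by
          have : ‖TE‖ ≤ 1/2 := by rw [hTE, ← Matrix.cstar_norm_def]; exact hE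
          nlinarith [norm_nonneg v, TE.opNorm_nonneg]
  have := abs_le.mp h5
  rw [h1, h2, h3, h4]
  nlinarith [norm_nonneg v]

lemma K_isUnit (K : Matrix m m ℂ) (hE : ‖Kᴴ * K - 1‖ ≤ 1/2) : IsUnit K := by
  rw [← Matrix.mulVec_injective_iff_isUnit]
  intro u u' huu
  have h1 : toEuclideanCLM (𝕜 := ℂ) K ((WithLp.equiv 2 (m → ℂ)).symm u)
      = toEuclideanCLM (𝕜 := ℂ) K ((WithLp.equiv 2 (m → ℂ)).symm u') := by
    rw [WithLp.equiv_symm_apply, Matrix.toEuclideanCLM_toLp, Matrix.toEuclideanCLM_toLp, huu]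
  have h2 : ∀ v : EuclideanSpace ℂ m, toEuclideanCLM (𝕜 := ℂ) K v = 0 → v = 0 := by
    intro v hv
    have := Kv_lower K hE v
    rw [hv] at this
    simp at this
    have hn : ‖v‖ = 0 := by simp [this]
    exact norm_eq_zero.mp hn
  have h3 : ((WithLp.equiv 2 (m → ℂ)).symm u : EuclideanSpace ℂ m)
      = (WithLp.equiv 2 (m → ℂ)).symm u' := by
    have := h2 ((WithLp.equiv 2 (m → ℂ)).symm u - (WithLp.equiv 2 (m → ℂ)).symm u')
      (by rw [map_sub, h1, sub_self])
    exact sub_eq_zero.mp this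
  exact (WithLp.equiv 2 (m → ℂ)).symm.injective h3

lemma Kinv_norm_le (K : Matrix m m ℂ) (hE : ‖Kᴴ * K - 1‖ ≤ 1/2) : ‖K⁻¹‖ ≤ Real.sqrt 2 := by
  have hU := K_isUnit K hE
  have hdet : IsUnit K.det := (Matrix.isUnit_iff_isUnit_det K).mp hU
  have hKK : K * K⁻¹ = 1 := Matrix.mul_nonsing_inv K hdet
  rw [Matrix.cstar_norm_def]
  refine ContinuousLinearMap.opNorm_le_bound _ (Real.sqrt_nonneg 2) fun w => ?_
  set v : EuclideanSpace ℂ m := toEuclideanCLM (𝕜 := ℂ) K⁻¹ w with hv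
  have h1 : toEuclideanCLM (𝕜 := ℂ) K v = w := by
    rw [hv]
    have hcomp : (toEuclideanCLM (𝕜 := ℂ) K) ((toEuclideanCLM (𝕜 := ℂ) K⁻¹) w)
        = (toEuclideanCLM (𝕜 := ℂ) (K * K⁻¹)) w := by rw [_root_.map_mul]; rfl
    rw [hcomp, hKK, _root_.map_one]
    rfl
  have h2 := Kv_lower K hE v
  rw [h1] at h2
  have h3 : Real.sqrt 2 ^ 2 = 2 := Real.sq_sqrt (by norm_num)
  nlinarith [norm_nonneg v, norm_nonneg w, Real.sqrt_nonneg 2,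
    mul_nonneg (Real.sqrt_nonneg 2) (norm_nonneg w)]

end AuxNorm
-- ==================== Trace / Parseval layer ====================

noncomputable section AuxTrace

variable {n : ℕ}

local notation "Nn" => (Fin n → Fin 2)

lemma norm_sq_decomp (z : ℂ) : ‖z‖ ^ 2 = z.re ^ 2 + z.im ^ 2 := by
  rw [Complex.sq_norm, Complex.normSq_apply]
  ring

lemma mul_star_re (z : ℂ) : (z * star z).re = ‖z‖ ^ 2 := by
  rw [show (star z : ℂ) = starRingEnd ℂ z from rfl, Complex.mul_conj]
  simp only [Complex.ofReal_re]
  rw [norm_sq_decomp, Complex.normSq_apply]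
  ring

lemma normsq_of_self_star {z : ℂ} (hz : star z = z) : ‖z‖ ^ 2 = z.re ^ 2 := by
  have him : z.im = 0 := by
    have := congrArg Complex.im hz
    simp only [Complex.star_def, Complex.conj_im] at this
    linarith
  rw [norm_sq_decomp, him]
  ring

lemma sum_pairs {β : Type*} [AddCommMonoid β] (g : Nn → Nn → β) :
    ∑ p : Nn × Nn, g p.1 p.2 = ∑ i, ∑ j, g i j := by
  rw [Fintype.sum_prod_type]

lemma trace_mul_pauliOp (A : Matrix Nn Nn ℂ) (s : Fin n → Fin 4) :
    (A * pauliOp s).trace = ∑ p : Nn × Nn, A p.1 p.2 * pauliOp s p.2 p.1 := by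
  rw [Matrix.trace, Fintype.sum_prod_type]
  exact Finset.sum_congr rfl fun i _ => by rw [Matrix.diag_apply, Matrix.mul_apply]

lemma star_trace_mul_pauliOp (A : Matrix Nn Nn ℂ) (s : Fin n → Fin 4) :
    star ((A * pauliOp s).trace) = ∑ p : Nn × Nn, star (A p.1 p.2) * pauliOp s p.1 p.2 := by
  rw [trace_mul_pauliOp, show (star (∑ p : Nn × Nn, A p.1 p.2 * pauliOp s p.2 p.1) : ℂ)
      = ∑ p : Nn × Nn, star (A p.1 p.2 * pauliOp s p.2 p.1) from map_sum (starRingEnd ℂ) _ _]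
  refine Finset.sum_congr rfl fun p _ => ?_
  rw [star_mul', pauliOp_star_apply]

/-- Parseval (complex form). -/
lemma parseval_complex (A : Matrix Nn Nn ℂ) :
    ∑ s : Fin n → Fin 4, ((A * pauliOp s).trace * star ((A * pauliOp s).trace))
      = (2:ℂ)^n * ∑ p : Nn × Nn, A p.1 p.2 * star (A p.1 p.2) := by
  have step1 : ∀ s : Fin n → Fin 4, (A * pauliOp s).trace * star ((A * pauliOp s).trace)
      = ∑ p : Nn × Nn, ∑ q : Nn × Nn,
          (A p.1 p.2 * star (A q.1 q.2)) * (pauliOp s p.2 p.1 * pauliOp s q.1 q.2) := by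
    intro s
    rw [star_trace_mul_pauliOp, trace_mul_pauliOp, Finset.sum_mul_sum]
    exact Finset.sum_congr rfl fun p _ => Finset.sum_congr rfl fun q _ => by ring
  simp only [step1]
  rw [Finset.sum_comm]
  have step2 : ∀ p : Nn × Nn,
      (∑ s : Fin n → Fin 4, ∑ q : Nn × Nn,
          (A p.1 p.2 * star (A q.1 q.2)) * (pauliOp s p.2 p.1 * pauliOp s q.1 q.2))
        = (A p.1 p.2 * star (A p.1 p.2)) * (2:ℂ)^n := by
    intro p
    rw [Finset.sum_comm]
    have hq : ∀ q : Nn × Nn,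
        (∑ s : Fin n → Fin 4, (A p.1 p.2 * star (A q.1 q.2)) * (pauliOp s p.2 p.1 * pauliOp s q.1 q.2))
          = if q = p then (A p.1 p.2 * star (A q.1 q.2)) * (2:ℂ)^n else 0 := by
      intro q
      rw [← Finset.mul_sum, pauliOp_complete p.2 p.1 q.1 q.2]
      have hcond : (p.2 = q.2 ∧ p.1 = q.1) ↔ q = p := by
        rw [Prod.ext_iff]
        constructor
        · rintro ⟨h1, h2⟩; exact ⟨h2.symm, h1.symm⟩
        · rintro ⟨h1, h2⟩; exact ⟨h2.symm, h1.symm⟩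
      rw [if_congr hcond rfl rfl, mul_ite, mul_zero]
    rw [Finset.sum_congr rfl fun q _ => hq q, Finset.sum_ite_eq' Finset.univ p
      (fun q => (A p.1 p.2 * star (A q.1 q.2)) * (2:ℂ)^n)]
    simp
  rw [Finset.sum_congr rfl fun p _ => step2 p, ← Finset.sum_mul, mul_comm]

lemma re_sum' {α : Type*} (s : Finset α) (f : α → ℂ) : (∑ a ∈ s, f a).re = ∑ a ∈ s, (f a).re :=
  map_sum Complex.reAddGroupHom f s

/-- Parseval (real form). -/
lemma parseval_real (A : Matrix Nn Nn ℂ) :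
    ∑ s : Fin n → Fin 4, ‖(A * pauliOp s).trace‖ ^ 2 = 2^n * frobNorm A ^ 2 := by
  have h := congrArg Complex.re (parseval_complex A)
  rw [re_sum'] at h
  simp only [mul_star_re] at h
  rw [h]
  have h2 : ((2:ℂ)^n * ∑ p : Nn × Nn, A p.1 p.2 * star (A p.1 p.2)).re
      = 2^n * (∑ p : Nn × Nn, A p.1 p.2 * star (A p.1 p.2)).re := by
    rw [show ((2:ℂ)^n) = (((2:ℝ)^n : ℝ) : ℂ) by push_cast; ring, Complex.re_ofReal_mul]
  rw [h2, re_sum']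
  simp only [mul_star_re]
  rw [frobNorm_sq, sum_pairs (fun i j => ‖A i j‖ ^ 2)]

/-- h₀ is the diagonal part of `M = K†HK`. -/
lemma h0_eq_diagonal {d : ℕ} (H : Matrix Nn Nn ℂ) (P : Fin d → Fin n → Fin 4)
    (x : (Fin d → ℝ) × (Fin d → ℝ)) :
    h0 H P x = Matrix.diagonal (fun i => ((Kmat P x)ᴴ * H * Kmat P x) i i) := by
  set M := (Kmat P x)ᴴ * H * Kmat P x with hM
  ext i j
  have hLHS : h0 H P x i j
      = ((2:ℂ)^n)⁻¹ * ∑ Q ∈ DiagStrings n, (M * pauliOp Q).trace * pauliOp Q i j := by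
    rw [h0, Matrix.smul_apply, smul_eq_mul]
    congr 1
    rw [Matrix.sum_apply]
    exact Finset.sum_congr rfl fun Q _ => by rw [Matrix.smul_apply, smul_eq_mul, hM]
  rw [hLHS]
  have hswap : ∑ Q ∈ DiagStrings n, (M * pauliOp Q).trace * pauliOp Q i j
      = ∑ p : Nn × Nn, M p.1 p.2 * ∑ Q ∈ DiagStrings n, pauliOp Q p.2 p.1 * pauliOp Q i j := by
    rw [show (∑ Q ∈ DiagStrings n, (M * pauliOp Q).trace * pauliOp Q i j)
        = ∑ Q ∈ DiagStrings n, ∑ p : Nn × Nn, (M p.1 p.2 * pauliOp Q p.2 p.1) * pauliOp Q i j by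
      refine Finset.sum_congr rfl fun Q _ => ?_
      rw [trace_mul_pauliOp, Finset.sum_mul]]
    rw [Finset.sum_comm]
    refine Finset.sum_congr rfl fun p _ => ?_
    rw [Finset.mul_sum]
    exact Finset.sum_congr rfl fun Q _ => by ring
  rw [hswap]
  simp only [pauliOp_diag_complete]
  by_cases hij : i = j
  · subst hij
    have hc : ∀ p : Nn × Nn,
        M p.1 p.2 * (if p.2 = p.1 ∧ i = i ∧ p.2 = i then (2:ℂ)^n else 0)
          = if p = (i, i) then M p.1 p.2 * (2:ℂ)^n else 0 := by
      intro p
      have hcond : (p.2 = p.1 ∧ i = i ∧ p.2 = i) ↔ p = (i, i) := by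
        rw [Prod.ext_iff]
        constructor
        · rintro ⟨h1, _, h3⟩; exact ⟨h1 ▸ h3, h3⟩
        · rintro ⟨h1, h2⟩; exact ⟨by rw [h1, h2], rfl, h2⟩
      rw [if_congr hcond rfl rfl, mul_ite, mul_zero]
    rw [Finset.sum_congr rfl fun p _ => hc p,
      Finset.sum_ite_eq' Finset.univ ((i, i) : Nn × Nn) (fun p => M p.1 p.2 * (2:ℂ)^n)]
    simp only [Finset.mem_univ, if_true, Matrix.diagonal_apply_eq]
    field_simp
  · have hc : ∀ p : Nn × Nn,
        M p.1 p.2 * (if p.2 = p.1 ∧ i = j ∧ p.2 = i then (2:ℂ)^n else 0) = 0 := by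
      intro p
      rw [if_neg (by rintro ⟨_, h2, _⟩; exact hij h2), mul_zero]
    rw [Finset.sum_congr rfl fun p _ => hc p]
    simp [Matrix.diagonal_apply_ne _ hij]

end AuxTrace
-- ==================== K-specific trace computations ====================

noncomputable section AuxKK

variable {n d : ℕ}

local notation "Nn" => (Fin n → Fin 2)

lemma frobNorm_diag_le {m : Type*} [Fintype m] [DecidableEq m] (M : Matrix m m ℂ) :
    frobNorm (Matrix.diagonal (fun i => M i i)) ≤ frobNorm M := by
  unfold frobNorm
  have hle : ∀ i, (∑ j, ‖Matrix.diagonal (fun k => M k k) i j‖ ^ 2) ≤ ∑ j, ‖M i j‖ ^ 2 := by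
    intro i
    have h1 : ∑ j, ‖Matrix.diagonal (fun k => M k k) i j‖ ^ 2 = ‖M i i‖ ^ 2 := by
      rw [Finset.sum_eq_single i]
      · rw [Matrix.diagonal_apply_eq]
      · intro j _ hj
        rw [Matrix.diagonal_apply_ne' _ hj]
        simp
      · simp
    rw [h1]
    exact Finset.single_le_sum (f := fun j => ‖M i j‖ ^ 2) (fun j _ => sq_nonneg _) (Finset.mem_univ i)
  exact Real.sqrt_le_sqrt (Finset.sum_le_sum fun i _ => hle i)

lemma trace_star_self {A Q : Matrix Nn Nn ℂ} (hA : Aᴴ = A) (hQ : Qᴴ = Q) :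
    star ((A * Q).trace) = (A * Q).trace := by
  rw [← Matrix.trace_conjTranspose, Matrix.conjTranspose_mul, hA, hQ, Matrix.trace_mul_comm]

def cK (x : (Fin d → ℝ) × (Fin d → ℝ)) : Fin d → ℂ :=
  fun j => (x.1 j : ℂ) * Complex.exp (Complex.I * (x.2 j : ℂ))

variable (P : Fin d → Fin n → Fin 4) (x : (Fin d → ℝ) × (Fin d → ℝ))

lemma Kmat_eq : Kmat P x = ∑ j, cK x j • pauliOp (P j) := rfl

lemma Kmat_conjT : (Kmat P x)ᴴ = ∑ i, star (cK x i) • pauliOp (P i) := by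
  rw [Kmat_eq, Matrix.conjTranspose_sum]
  exact Finset.sum_congr rfl fun i _ => by
    rw [Matrix.conjTranspose_smul, pauliOp_conjTranspose]

lemma KdK_eq : (Kmat P x)ᴴ * Kmat P x
    = ∑ i, ∑ j, (star (cK x i) * cK x j) • (pauliOp (P i) * pauliOp (P j)) := by
  rw [Kmat_conjT, Kmat_eq, Finset.sum_mul_sum]
  refine Finset.sum_congr rfl fun i _ => Finset.sum_congr rfl fun j _ => ?_
  rw [smul_mul_assoc, mul_smul_comm, smul_smul]

lemma trace_KdK_mul (Q : Fin n → Fin 4) :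
    ((Kmat P x)ᴴ * Kmat P x * pauliOp Q).trace
      = ∑ i, ∑ j, (star (cK x i) * cK x j) *
          ((∏ k, c4 (P i k) (P j k)) *
            (if (fun k => m4 (P i k) (P j k)) = Q then (2:ℂ)^n else 0)) := by
  rw [KdK_eq, Finset.sum_mul, Matrix.trace_sum]
  refine Finset.sum_congr rfl fun i _ => ?_
  rw [Finset.sum_mul, Matrix.trace_sum]
  refine Finset.sum_congr rfl fun j _ => ?_
  rw [smul_mul_assoc, Matrix.trace_smul, smul_eq_mul]
  congr 1
  rw [pauliOp_mul, smul_mul_assoc, Matrix.trace_smul, smul_eq_mul, pauliOp_orth]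

lemma star_cK_self (j : Fin d) : star (cK x j) * cK x j = ((x.1 j ^ 2 : ℝ) : ℂ) := by
  unfold cK
  rw [star_mul']
  rw [show (star ((x.1 j : ℂ)) : ℂ) = ((x.1 j : ℂ)) from Complex.conj_ofReal _]
  have h2 : (star (Complex.exp (Complex.I * (x.2 j : ℂ))) : ℂ)
      = Complex.exp (-(Complex.I * (x.2 j : ℂ))) := by
    rw [show (star (Complex.exp (Complex.I * (x.2 j : ℂ))) : ℂ)
        = (starRingEnd ℂ) (Complex.exp (Complex.I * (x.2 j : ℂ))) from rfl]
    rw [← Complex.exp_conj]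
    congr 1
    rw [_root_.map_mul, Complex.conj_I, Complex.conj_ofReal]
    ring
  rw [h2, mul_mul_mul_comm, ← Complex.exp_add, neg_add_cancel, Complex.exp_zero, mul_one]
  push_cast
  ring

lemma mu_eq_zero_iff {P : Fin d → Fin n → Fin 4} (hP : Function.Injective P) (i j : Fin d) :
    ((fun k => m4 (P i k) (P j k)) = fun _ => (0 : Fin 4)) ↔ i = j := by
  constructor
  · intro h
    exact hP (funext fun k => m4_eq_zero_iff.mp (congrFun h k))
  · rintro rfl
    funext k
    rw [m4_self]

lemma trace_KdK_one (hP : Function.Injective P) (hx : ∑ j, x.1 j ^ 2 = 1) :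
    ((Kmat P x)ᴴ * Kmat P x * pauliOp (fun _ => (0 : Fin 4))).trace = (2:ℂ)^n := by
  rw [trace_KdK_mul]
  have hterm : ∀ i, (∑ j, (star (cK x i) * cK x j) *
      ((∏ k, c4 (P i k) (P j k)) *
        (if (fun k => m4 (P i k) (P j k)) = (fun _ => (0:Fin 4)) then (2:ℂ)^n else 0)))
      = ((x.1 i ^ 2 : ℝ) : ℂ) * (2:ℂ)^n := by
    intro i
    rw [Finset.sum_eq_single i]
    · rw [if_pos ((mu_eq_zero_iff hP i i).mpr rfl), star_cK_self]
      have : (∏ k, c4 (P i k) (P i k)) = 1 := by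
        rw [Finset.prod_congr rfl fun k _ => c4_self (P i k)]
        simp
      rw [this, one_mul]
    · intro j _ hj
      rw [if_neg (fun hc => hj ((mu_eq_zero_iff hP i j).mp hc).symm), mul_zero, mul_zero]
    · simp
  rw [Finset.sum_congr rfl fun i _ => hterm i, ← Finset.sum_mul]
  rw [show (∑ i, ((x.1 i ^ 2 : ℝ) : ℂ)) = ((∑ i, x.1 i ^ 2 : ℝ) : ℂ) by push_cast; ring]
  rw [hx]
  simp

lemma trace_KdK_notG2 {Q : Fin n → Fin 4} (hQ0 : Q ≠ fun _ => 0) (hQ : Q ∉ G2 P) :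
    ((Kmat P x)ᴴ * Kmat P x * pauliOp Q).trace = 0 := by
  rw [trace_KdK_mul]
  refine Finset.sum_eq_zero fun i _ => Finset.sum_eq_zero fun j _ => ?_
  rw [if_neg, mul_zero, mul_zero]
  intro hc
  apply hQ
  refine Finset.mem_filter.mpr ⟨Finset.mem_univ _, hQ0, i, j, ∏ k, c4 (P i k) (P j k), ?_, ?_⟩
  · exact R4_prod _ (fun k => R4_c4 _ _)
  · rw [pauliOp_mul, hc]

end AuxKK
set_option maxHeartbeats 2000000 in
/-- a posteriori error bound: if `‖r‖ = 1`, `0 ≤ ε ≤ 1/4` and the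
orthogonality part of the cost is at most `ε/2ⁿ`, then with `H̃ = K h₀ K†` one has
`‖H − H̃‖₂ ≤ 2 √(F(r,θ)/2ⁿ) + 9 ‖H‖_F √ε`. -/
theorem statement10 {n d : ℕ} (hn : 1 ≤ n)
    (H : Matrix (Fin n → Fin 2) (Fin n → Fin 2) ℂ) (hH : H.IsHermitian)
    (P : Fin d → Fin n → Fin 4) (hP : Function.Injective P)
    (x : (Fin d → ℝ) × (Fin d → ℝ)) (hx : ∑ j, x.1 j ^ 2 = 1)
    (ε : ℝ) (hε0 : 0 ≤ ε) (hε1 : ε ≤ 1 / 4)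
    (hφ : ∑ Q ∈ G2 P, phi P Q x ^ 2 ≤ ε / 2 ^ n) :
    specNorm (H - Kmat P x * h0 H P x * (Kmat P x)ᴴ) ≤
      2 * Real.sqrt (totalF H P x / 2 ^ n) + 9 * frobNorm H * Real.sqrt ε := by
  have h2pow : (0:ℝ) < 2 ^ n := by positivity
  set K := Kmat P x with hKdef
  set M : Matrix (Fin n → Fin 2) (Fin n → Fin 2) ℂ := Kᴴ * H * K with hM
  set E : Matrix (Fin n → Fin 2) (Fin n → Fin 2) ℂ := Kᴴ * K - 1 with hEdef
  set D : Matrix (Fin n → Fin 2) (Fin n → Fin 2) ℂ := Matrix.diagonal (fun i => M i i) with hD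
  -- traces of E vanish off G2
  have htrace1 : (Kᴴ * K * pauliOp (fun _ => (0:Fin 4))).trace = (2:ℂ)^n := by
    rw [hKdef]; exact trace_KdK_one P x hP hx
  have htrE0 : ∀ Q : Fin n → Fin 4, Q ∉ G2 P → (E * pauliOp Q).trace = 0 := by
    intro Q hQ
    rw [hEdef, Matrix.sub_mul, Matrix.trace_sub, Matrix.one_mul, pauliOp_trace]
    by_cases hQ0 : Q = fun _ => 0
    · subst hQ0
      rw [htrace1, if_pos rfl, sub_self]
    · rw [show (Kᴴ * K * pauliOp Q).trace = 0 from by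
        rw [hKdef]; exact trace_KdK_notG2 P x hQ0 hQ, if_neg hQ0, sub_zero]
  -- Frobenius bound for E
  have hfrobE2 : frobNorm E ^ 2 ≤ ε := by
    have hpars := parseval_real E
    have hsub : ∑ Q ∈ G2 P, ‖(E * pauliOp Q).trace‖ ^ 2
        = ∑ Q : Fin n → Fin 4, ‖(E * pauliOp Q).trace‖ ^ 2 :=
      Finset.sum_subset (Finset.subset_univ _) (fun Q _ hQ => by rw [htrE0 Q hQ]; simp)
    have hterm : ∀ Q ∈ G2 P, ‖(E * pauliOp Q).trace‖ ^ 2 = ((2:ℝ)^n)^2 * phi P Q x ^ 2 := by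
      intro Q hQ
      have hQ0 : Q ≠ fun _ => 0 := (Finset.mem_filter.mp hQ).2.1
      have htr : (E * pauliOp Q).trace = (Kᴴ * K * pauliOp Q).trace := by
        rw [hEdef, Matrix.sub_mul, Matrix.trace_sub, Matrix.one_mul, pauliOp_trace, if_neg hQ0,
          sub_zero]
      have hKKh : (Kᴴ * K)ᴴ = Kᴴ * K := by
        rw [Matrix.conjTranspose_mul, Matrix.conjTranspose_conjTranspose]
      have hreal := trace_star_self (n := n) hKKh (pauliOp_conjTranspose Q)
      rw [htr, normsq_of_self_star hreal]
      have hphidef : phi P Q x = (1/2^n) * (Kᴴ * K * pauliOp Q).trace.re := rfl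
      rw [hphidef]
      field_simp
    rw [Finset.sum_congr rfl hterm] at hsub
    rw [← hsub] at hpars
    have h5 : frobNorm E ^ 2 = 2^n * ∑ Q ∈ G2 P, phi P Q x ^ 2 := by
      have h6 : (2:ℝ)^n * frobNorm E ^ 2 = 2^n * (2^n * ∑ Q ∈ G2 P, phi P Q x ^ 2) := by
        rw [← hpars, Finset.mul_sum, Finset.mul_sum]
        exact Finset.sum_congr rfl fun Q _ => by ring
      exact mul_left_cancel₀ (ne_of_gt h2pow) h6
    rw [h5]
    calc (2:ℝ)^n * ∑ Q ∈ G2 P, phi P Q x ^ 2 ≤ 2^n * (ε / 2^n) :=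
          mul_le_mul_of_nonneg_left hφ h2pow.le
      _ = ε := by field_simp
  have hfrobE : frobNorm E ≤ Real.sqrt ε := by
    have h := Real.sqrt_le_sqrt hfrobE2
    rwa [Real.sqrt_sq (frobNorm_nonneg E)] at h
  have hse2 : Real.sqrt ε ≤ 1/2 := by
    have h := Real.sqrt_le_sqrt hε1
    rwa [show Real.sqrt (1/4 : ℝ) = 1/2 from by
      rw [show (1/4 : ℝ) = (1/2)^2 by norm_num, Real.sqrt_sq (by norm_num)]] at h
  have hEnorm : ‖E‖ ≤ Real.sqrt ε := (specNorm_le_frobNorm E).trans hfrobE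
  have hE12 : ‖Kᴴ * K - 1‖ ≤ 1/2 := by
    rw [← hEdef]; exact hEnorm.trans hse2
  -- invertibility of K
  have hU := K_isUnit K hE12
  have hdet : IsUnit K.det := (Matrix.isUnit_iff_isUnit_det K).mp hU
  have hKK1 : K * K⁻¹ = 1 := Matrix.mul_nonsing_inv K hdet
  have hkinv : ‖K⁻¹‖ ≤ Real.sqrt 2 := Kinv_norm_le K hE12
  have hKKE : Kᴴ * K = 1 + E := by rw [hEdef]; abel
  have hKn : ‖K‖ * ‖K‖ ≤ 3/2 := by
    rw [← Matrix.l2_opNorm_conjTranspose_mul_self, hKKE]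
    calc ‖(1 : Matrix (Fin n → Fin 2) (Fin n → Fin 2) ℂ) + E‖
        ≤ ‖(1 : Matrix (Fin n → Fin 2) (Fin n → Fin 2) ℂ)‖ + ‖E‖ := norm_add_le _ _
      _ ≤ 1 + 1/2 := add_le_add matrix_norm_one_le (hEnorm.trans hse2)
      _ = 3/2 := by norm_num
  -- M and h0
  have hMherm : Mᴴ = M := by
    rw [hM, Matrix.conjTranspose_mul, Matrix.conjTranspose_mul,
      Matrix.conjTranspose_conjTranspose, hH.eq, ← Matrix.mul_assoc]
  have hh0D : h0 H P x = D := by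
    rw [hD, hM, hKdef]
    exact h0_eq_diagonal H P x
  -- cost identity
  have htrMre : ∀ Q ∈ G1 n, ((M * pauliOp Q).trace.re)^2 = ‖(M * pauliOp Q).trace‖^2 :=
    fun Q _ => (normsq_of_self_star (trace_star_self hMherm (pauliOp_conjTranspose Q))).symm
  have htrB : ∀ Q ∈ G1 n, ((M - D) * pauliOp Q).trace = (M * pauliOp Q).trace := by
    intro Q hQ
    rw [Matrix.sub_mul, Matrix.trace_sub]
    have hDQ : (D * pauliOp Q).trace = 0 := by
      rw [Matrix.trace]
      refine Finset.sum_eq_zero fun i _ => ?_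
      rw [Matrix.diag_apply, hD, Matrix.diagonal_mul, pauliOp_G1_diag_zero hQ i, mul_zero]
    rw [hDQ, sub_zero]
  have htrB0 : ∀ Q, Q ∉ G1 n → ((M - D) * pauliOp Q).trace = 0 := by
    intro Q hQ
    have hQd : Q ∈ DiagStrings n := by
      by_contra hc
      exact hQ ((mem_G1_iff Q).mpr hc)
    rw [Matrix.sub_mul, Matrix.trace_sub]
    have h1 : (M * pauliOp Q).trace = ∑ i, M i i * pauliOp Q i i := by
      rw [trace_mul_pauliOp, sum_pairs (fun i j => M i j * pauliOp Q j i)]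
      refine Finset.sum_congr rfl fun i _ => ?_
      rw [Finset.sum_eq_single i]
      · intro j _ hj
        rw [pauliOp_diagstr_offdiag_zero hQd hj, mul_zero]
      · simp
    have h2 : (D * pauliOp Q).trace = ∑ i, M i i * pauliOp Q i i := by
      rw [Matrix.trace]
      refine Finset.sum_congr rfl fun i _ => ?_
      rw [Matrix.diag_apply, hD, Matrix.diagonal_mul]
    rw [h1, h2, sub_self]
  have hcost : costf H P x = 2^n * frobNorm (M - D) ^ 2 := by
    have hc1 : costf H P x = ∑ Q ∈ G1 n, ((M * pauliOp Q).trace.re)^2 := by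
      simp only [costf, ← hKdef, ← hM]
    rw [hc1, ← parseval_real (M - D)]
    rw [show (∑ Q : Fin n → Fin 4, ‖((M - D) * pauliOp Q).trace‖^2)
        = ∑ Q ∈ G1 n, ‖((M - D) * pauliOp Q).trace‖^2 from
      (Finset.sum_subset (Finset.subset_univ _) fun Q _ hQ => by rw [htrB0 Q hQ]; simp).symm]
    refine Finset.sum_congr rfl fun Q hQ => ?_
    rw [htrB Q hQ, htrMre Q hQ]
  have hBD : ‖M - D‖ ≤ Real.sqrt (totalF H P x / 2^n) := by
    have hphinn : (0:ℝ) ≤ ∑ Q ∈ G2 P, phi P Q x ^ 2 :=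
      Finset.sum_nonneg fun _ _ => sq_nonneg _
    have hcle : costf H P x ≤ totalF H P x := by
      rw [totalF]; linarith
    have h1 : frobNorm (M - D) ^ 2 ≤ totalF H P x / 2^n := by
      have h2 : frobNorm (M - D)^2 = costf H P x / 2^n := by
        rw [hcost]; field_simp
      rw [h2]
      gcongr
    calc ‖M - D‖ ≤ frobNorm (M - D) := specNorm_le_frobNorm _
      _ = Real.sqrt (frobNorm (M - D)^2) := (Real.sqrt_sq (frobNorm_nonneg _)).symm
      _ ≤ Real.sqrt (totalF H P x / 2^n) := Real.sqrt_le_sqrt h1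
  -- spectral bound for D
  have hDspec : ‖D‖ ≤ 3/2 * frobNorm H := by
    have h1 : frobNorm D ≤ frobNorm M := by rw [hD]; exact frobNorm_diag_le M
    have h2 : frobNorm M ≤ 3/2 * frobNorm H := by
      calc frobNorm M ≤ frobNorm (Kᴴ * H) * ‖K‖ := by
            rw [hM]; exact frobNorm_mul_le_right _ _
        _ ≤ (‖Kᴴ‖ * frobNorm H) * ‖K‖ :=
            mul_le_mul_of_nonneg_right (frobNorm_mul_le_left _ _) (norm_nonneg _)
        _ = (‖K‖ * ‖K‖) * frobNorm H := by rw [Matrix.l2_opNorm_conjTranspose]; ring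
        _ ≤ 3/2 * frobNorm H := mul_le_mul_of_nonneg_right hKn (frobNorm_nonneg H)
    calc ‖D‖ ≤ frobNorm D := specNorm_le_frobNorm D
      _ ≤ frobNorm M := h1
      _ ≤ 3/2 * frobNorm H := h2
  -- the key algebraic identity
  have hct : (K⁻¹)ᴴ * Kᴴ = 1 := by
    rw [← Matrix.conjTranspose_mul, hKK1, Matrix.conjTranspose_one]
  have key : ∀ A : Matrix (Fin n → Fin 2) (Fin n → Fin 2) ℂ,
      (K⁻¹)ᴴ * (Kᴴ * A * K) * K⁻¹ = A := by
    intro A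
    calc (K⁻¹)ᴴ * (Kᴴ * A * K) * K⁻¹ = ((K⁻¹)ᴴ * Kᴴ) * A * (K * K⁻¹) := by
          simp only [Matrix.mul_assoc]
      _ = A := by rw [hct, hKK1, Matrix.one_mul, Matrix.mul_one]
  have hmid : (Kᴴ * K) * D * (Kᴴ * K) = Kᴴ * (K * D * Kᴴ) * K := by
    simp only [Matrix.mul_assoc]
  have hid : H - K * h0 H P x * Kᴴ
      = (K⁻¹)ᴴ * ((M - D) - (E * D + D * E + E * D * E)) * K⁻¹ := by
    have h1 : H - K * D * Kᴴ = (K⁻¹)ᴴ * (M - (Kᴴ * K) * D * (Kᴴ * K)) * K⁻¹ := by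
      rw [Matrix.mul_sub, Matrix.sub_mul, hM, key H, hmid, key (K * D * Kᴴ)]
    have hdec : M - (Kᴴ * K) * D * (Kᴴ * K) = (M - D) - (E * D + D * E + E * D * E) := by
      rw [hKKE]; noncomm_ring
    rw [hh0D, h1, hdec]
  -- final estimate
  rw [show specNorm (H - K * h0 H P x * Kᴴ) = ‖H - K * h0 H P x * Kᴴ‖ from rfl, hid]
  set X : Matrix (Fin n → Fin 2) (Fin n → Fin 2) ℂ
    := (M - D) - (E * D + D * E + E * D * E) with hXdef
  have hnorm1 : ‖(K⁻¹)ᴴ * X * K⁻¹‖ ≤ (‖K⁻¹‖ * ‖K⁻¹‖) * ‖X‖ := by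
    calc ‖(K⁻¹)ᴴ * X * K⁻¹‖ ≤ ‖(K⁻¹)ᴴ * X‖ * ‖K⁻¹‖ := Matrix.l2_opNorm_mul _ _
      _ ≤ (‖(K⁻¹)ᴴ‖ * ‖X‖) * ‖K⁻¹‖ :=
          mul_le_mul_of_nonneg_right (Matrix.l2_opNorm_mul _ _) (norm_nonneg _)
      _ = (‖K⁻¹‖ * ‖K⁻¹‖) * ‖X‖ := by rw [Matrix.l2_opNorm_conjTranspose]; ring
  have hXbound : ‖X‖ ≤ ‖M - D‖ + (‖E‖ * ‖D‖ + ‖D‖ * ‖E‖ + ‖E‖ * ‖D‖ * ‖E‖) := by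
    have h3 : ‖E * D * E‖ ≤ ‖E‖ * ‖D‖ * ‖E‖ := by
      calc ‖E * D * E‖ ≤ ‖E * D‖ * ‖E‖ := Matrix.l2_opNorm_mul _ _
        _ ≤ (‖E‖ * ‖D‖) * ‖E‖ :=
            mul_le_mul_of_nonneg_right (Matrix.l2_opNorm_mul _ _) (norm_nonneg _)
    calc ‖X‖ ≤ ‖M - D‖ + ‖E * D + D * E + E * D * E‖ := norm_sub_le _ _
      _ ≤ ‖M - D‖ + (‖E‖ * ‖D‖ + ‖D‖ * ‖E‖ + ‖E‖ * ‖D‖ * ‖E‖) := by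
          have h4 := norm_add_le (E * D + D * E) (E * D * E)
          have h5 := norm_add_le (E * D) (D * E)
          have h6 := Matrix.l2_opNorm_mul E D
          have h7 := Matrix.l2_opNorm_mul D E
          linarith
  have hki2 : ‖K⁻¹‖ * ‖K⁻¹‖ ≤ 2 := by
    nlinarith [norm_nonneg (K⁻¹ : Matrix (Fin n → Fin 2) (Fin n → Fin 2) ℂ),
      Real.sq_sqrt (show (0:ℝ) ≤ 2 by norm_num), Real.sqrt_nonneg 2]
  have hX0 : (0:ℝ) ≤ ‖X‖ := norm_nonneg _
  have hE0 : (0:ℝ) ≤ ‖E‖ := norm_nonneg _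
  have hD0 : (0:ℝ) ≤ ‖D‖ := norm_nonneg _
  have hfH0 : (0:ℝ) ≤ frobNorm H := frobNorm_nonneg H
  have hse0 : (0:ℝ) ≤ Real.sqrt ε := Real.sqrt_nonneg _
  have hsq0 : (0:ℝ) ≤ Real.sqrt (totalF H P x / 2^n) := Real.sqrt_nonneg _
  calc ‖(K⁻¹)ᴴ * X * K⁻¹‖ ≤ (‖K⁻¹‖ * ‖K⁻¹‖) * ‖X‖ := hnorm1
    _ ≤ 2 * ‖X‖ := mul_le_mul_of_nonneg_right hki2 hX0
    _ ≤ 2 * (‖M - D‖ + (‖E‖ * ‖D‖ + ‖D‖ * ‖E‖ + ‖E‖ * ‖D‖ * ‖E‖)) := by linarith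
    _ ≤ 2 * Real.sqrt (totalF H P x / 2^n) + 9 * frobNorm H * Real.sqrt ε := by
        nlinarith [hBD, hDspec, hEnorm, hse2, hse0, hfH0, hE0, hD0,
          mul_le_mul_of_nonneg_right hEnorm hD0,
          mul_le_mul_of_nonneg_left hDspec hse0,
          mul_nonneg hse0 hfH0, mul_nonneg hE0 hD0,
          mul_le_mul (mul_le_mul_of_nonneg_right hEnorm hD0)
            (hEnorm.trans hse2) hE0 (mul_nonneg hse0 hD0)]
end

section
/- If ‖r‖ = 1, then for every a ∈ ℝ, ‖r − a·∇_r F(r,θ)‖² = 1 − 8a·F(r,θ) + a²·‖∇_r F(r,θ)‖², where ∇_r F = (∂F/∂r₁, …, ∂F/∂r_d) denotes the gradient of F in the radial variables. -/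
open Matrix Complex
open scoped Classical

section Aux

theorem aux_ofreal_diff : Differentiable ℝ (fun t : ℝ => (t : ℂ)) :=
  Complex.ofRealCLM.differentiable
theorem aux_re_diff : Differentiable ℝ Complex.re := Complex.reCLM.differentiable
theorem aux_star_diff : Differentiable ℝ (fun z : ℂ => star z) :=
  Complex.conjCLE.differentiable
attribute [fun_prop] aux_ofreal_diff aux_re_diff aux_star_diff

variable {n d : ℕ}

@[fun_prop] theorem Kmat_entry_diff (P : Fin d → Fin n → Fin 4) (i j : Fin n → Fin 2) :
    Differentiable ℝ (fun x => Kmat P x i j) := by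
  unfold Kmat
  simp only [Matrix.sum_apply, Matrix.smul_apply, smul_eq_mul]
  fun_prop

theorem trace_diff (P : Fin d → Fin n → Fin 4)
    (B A : Matrix (Fin n → Fin 2) (Fin n → Fin 2) ℂ) :
    Differentiable ℝ (fun x : (Fin d → ℝ) × (Fin d → ℝ) =>
      ((Kmat P x)ᴴ * B * Kmat P x * A).trace.re) := by
  simp only [Matrix.trace, Matrix.diag, Matrix.mul_apply, Matrix.conjTranspose_apply]
  fun_prop

theorem totalF_diff (H : Matrix (Fin n → Fin 2) (Fin n → Fin 2) ℂ)
    (P : Fin d → Fin n → Fin 4) :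
    Differentiable ℝ (totalF H P) := by
  unfold totalF costf phi
  apply Differentiable.add
  · exact Differentiable.fun_sum fun Q _ => (trace_diff P H (pauliOp Q)).pow 2
  · refine Differentiable.fun_sum fun Q _ => Differentiable.pow ?_ 2
    have h := ((trace_diff P 1 (pauliOp Q)).const_mul ((1:ℝ) / 2 ^ n))
    simpa only [Matrix.mul_one] using h

theorem Kmat_smul (P : Fin d → Fin n → Fin 4) (x : (Fin d → ℝ) × (Fin d → ℝ)) (t : ℝ) :
    Kmat P (t • x.1, x.2) = (t : ℂ) • Kmat P x := by
  unfold Kmat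
  rw [Finset.smul_sum]
  refine Finset.sum_congr rfl fun j _ => ?_
  simp [smul_smul, mul_assoc]

theorem trace_scale (P : Fin d → Fin n → Fin 4)
    (B A : Matrix (Fin n → Fin 2) (Fin n → Fin 2) ℂ)
    (x : (Fin d → ℝ) × (Fin d → ℝ)) (t : ℝ) :
    ((Kmat P (t • x.1, x.2))ᴴ * B * Kmat P (t • x.1, x.2) * A).trace.re
      = t ^ 2 * ((Kmat P x)ᴴ * B * Kmat P x * A).trace.re := by
  rw [Kmat_smul]
  rw [Matrix.conjTranspose_smul, Matrix.smul_mul, Matrix.smul_mul, Matrix.mul_smul,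
    Matrix.smul_mul, Matrix.smul_mul, Matrix.trace_smul, Matrix.trace_smul]
  simp [smul_smul, Complex.star_def, ← Complex.ofReal_pow, sq]
  ring

theorem totalF_scale (H : Matrix (Fin n → Fin 2) (Fin n → Fin 2) ℂ)
    (P : Fin d → Fin n → Fin 4) (x : (Fin d → ℝ) × (Fin d → ℝ)) (t : ℝ) :
    totalF H P (t • x.1, x.2) = t ^ 4 * totalF H P x := by
  unfold totalF costf phi
  rw [mul_add, Finset.mul_sum, Finset.mul_sum]
  congr 1
  · refine Finset.sum_congr rfl fun Q _ => ?_
    rw [trace_scale]; ring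
  · refine Finset.sum_congr rfl fun Q _ => ?_
    have h := trace_scale P 1 (pauliOp Q) x t
    simp only [Matrix.mul_one] at h
    rw [h]; ring

end Aux

theorem euler (H : Matrix (Fin n → Fin 2) (Fin n → Fin 2) ℂ)
    (P : Fin d → Fin n → Fin 4) (x : (Fin d → ℝ) × (Fin d → ℝ)) :
    fderiv ℝ (totalF H P) x (x.1, 0) = 4 * totalF H P x := by
  have hd : HasFDerivAt (totalF H P) (fderiv ℝ (totalF H P) x) x :=
    ((totalF_diff H P) x).hasFDerivAt
  have hc : HasDerivAt (fun t : ℝ => ((t • x.1, x.2) : (Fin d → ℝ) × (Fin d → ℝ)))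
      (x.1, 0) 1 := by
    have h1 : HasDerivAt (fun t : ℝ => t • x.1) x.1 1 := by
      simpa using (hasDerivAt_id (1:ℝ)).smul_const x.1
    simpa using h1.prodMk (hasDerivAt_const (1:ℝ) x.2)
  have h2 : HasDerivAt (fun t : ℝ => totalF H P (t • x.1, x.2))
      (fderiv ℝ (totalF H P) x (x.1, 0)) 1 := by
    have hx1 : (1:ℝ) • x.1 = x.1 := one_smul _ _
    have hd' : HasFDerivAt (totalF H P) (fderiv ℝ (totalF H P) x) ((1:ℝ) • x.1, x.2) := by
      rw [hx1]; exact hd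
    exact hd'.comp_hasDerivAt 1 hc
  have h2' : HasDerivAt (fun t : ℝ => t ^ 4 * totalF H P x)
      (fderiv ℝ (totalF H P) x (x.1, 0)) 1 := by
    refine h2.congr_of_eventuallyEq (Filter.Eventually.of_forall fun t => ?_)
    exact (totalF_scale H P x t).symm
  have h3 : HasDerivAt (fun t : ℝ => t ^ 4 * totalF H P x) (4 * totalF H P x) 1 := by
    simpa using (hasDerivAt_pow 4 (1:ℝ)).mul_const (totalF H P x)
  exact h2'.unique h3

/-- if `‖r‖ = 1`, then for every `a ∈ ℝ`,
`‖r − a ∇_r F(r,θ)‖² = 1 − 8a F(r,θ) + a² ‖∇_r F(r,θ)‖²`, where the `j`-th component of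
`∇_r F` is the partial derivative of `F` in the direction of the `j`-th radial coordinate. -/
theorem statement15 {n d : ℕ} (hn : 1 ≤ n)
    (H : Matrix (Fin n → Fin 2) (Fin n → Fin 2) ℂ) (hH : H.IsHermitian)
    (P : Fin d → Fin n → Fin 4) (hP : Function.Injective P)
    (x : (Fin d → ℝ) × (Fin d → ℝ)) (hx : ∑ j, x.1 j ^ 2 = 1) (a : ℝ) :
    ∑ j, (x.1 j - a * fderiv ℝ (totalF H P) x (Pi.single j 1, 0)) ^ 2 =
      1 - 8 * a * totalF H P x +
        a ^ 2 * ∑ j, (fderiv ℝ (totalF H P) x (Pi.single j 1, 0)) ^ 2 := by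
  set L := fderiv ℝ (totalF H P) x with hL
  have hsum : (x.1, (0 : Fin d → ℝ)) =
      ∑ j, x.1 j • ((Pi.single j 1 : Fin d → ℝ), (0 : Fin d → ℝ)) := by
    ext k
    · rw [Prod.fst_sum]
      simp [Finset.sum_apply, Pi.single_apply, mul_ite, Finset.sum_ite_eq']
    · rw [Prod.snd_sum]
      simp
  have heuler : ∑ j, x.1 j * L (Pi.single j 1, 0) = 4 * totalF H P x := by
    have h := euler H P x
    rw [hsum, map_sum] at h
    simp only [_root_.map_smul, smul_eq_mul] at h
    exact h
  have expand : ∀ j : Fin d, (x.1 j - a * L (Pi.single j 1, 0)) ^ 2 =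
      x.1 j ^ 2 - 2 * a * (x.1 j * L (Pi.single j 1, 0)) + a ^ 2 * L (Pi.single j 1, 0) ^ 2 := by
    intro j; ring
  rw [Finset.sum_congr rfl fun j _ => expand j]
  rw [Finset.sum_add_distrib, Finset.sum_sub_distrib, ← Finset.mul_sum, ← Finset.mul_sum,
    hx, heuler]
  ring
end
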